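/- With the notation A_i = W_{i+1}ᵀ···W_{H+1}ᵀ, B_i = W₁ᵀ···W_{i-1}ᵀ, E = (W_{H+1}···W₁X − Y)Xᵀ, and assuming rank(W_{H+1}···W₁) = k = min_i d_i with p a narrowest layer: the tuple (W₁,…,W_{H+1}) is a critical point of L(W) = ½‖W_{H+1}···W₁X − Y‖_F² (i.e., A_i E B_i = 0 for all i) if and only if A_p E = 0 and E B_{p+1} = 0. -/

import Mathlib

open Matrix

/-- Criticality criterion: with layers indexed `0,…,H` (`W i` is the paper's `W_{i+1}`),
`A i` the paper's `A_i = W_{i+1}ᵀ···W_{H+1}ᵀ` and `B (i-1)` the paper's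
`B_i = W₁ᵀ···W_{i-1}ᵀ` (characterized by recurrences), `E = (W_{H+1}···W₁X − Y)Xᵀ`,
and assuming the full product `(A 0)ᵀ` has rank `k = min_i d_i` (attained at a hidden
layer `p`, `1 ≤ p ≤ H`), the tuple is a critical point of `L` (i.e. `A_i E B_i = 0`
for all `i`) iff `A_p E = 0` and `E B_{p+1} = 0`. -/

lemma sq_isUnit_of_rank {n : ℕ} (Q : Matrix (Fin n) (Fin n) ℝ) (h : Q.rank = n) :
    IsUnit Q := by
  rw [← Matrix.mulVec_injective_iff_isUnit]
  have hsurj : Function.Surjective Q.mulVecLin := by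
    rw [← LinearMap.range_eq_top]
    apply Submodule.eq_top_of_finrank_eq
    rw [← Matrix.rank, h]
    simp
  have := (LinearMap.injective_iff_surjective (f := Q.mulVecLin)).2 hsurj
  exact this

lemma left_inv_of_rank {a n : ℕ} (M : Matrix (Fin a) (Fin n) ℝ) (h : M.rank = n) :
    ∃ D : Matrix (Fin n) (Fin a) ℝ, D * M = 1 := by
  have h2 : (Mᵀ * M).rank = n := by rw [Matrix.rank_transpose_mul_self, h]
  have hu := sq_isUnit_of_rank _ h2
  refine ⟨(Mᵀ * M)⁻¹ * Mᵀ, ?_⟩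
  rw [Matrix.mul_assoc, Matrix.nonsing_inv_mul _ ((Matrix.isUnit_iff_isUnit_det _).1 hu)]

lemma right_inv_of_rank {n b : ℕ} (N : Matrix (Fin n) (Fin b) ℝ) (h : N.rank = n) :
    ∃ D : Matrix (Fin b) (Fin n) ℝ, N * D = 1 := by
  have h2 : (N * Nᵀ).rank = n := by rw [Matrix.rank_self_mul_transpose, h]
  have hu := sq_isUnit_of_rank _ h2
  refine ⟨Nᵀ * (N * Nᵀ)⁻¹, ?_⟩
  rw [← Matrix.mul_assoc, Matrix.mul_nonsing_inv _ ((Matrix.isUnit_iff_isUnit_det _).1 hu)]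

theorem critical_point_iff
    {H m : ℕ} {d : ℕ → ℕ} (k p : ℕ)
    (hp1 : 1 ≤ p) (hpH : p ≤ H) (hdp : d p = k) (hmin : ∀ i ≤ H + 1, k ≤ d i)
    (hk : k < min (d 0) (d (H + 1)))
    (W : ∀ i : ℕ, Matrix (Fin (d (i + 1))) (Fin (d i)) ℝ)
    (X : Matrix (Fin (d 0)) (Fin m) ℝ) (Y : Matrix (Fin (d (H + 1))) (Fin m) ℝ)
    (A : ∀ i : ℕ, Matrix (Fin (d i)) (Fin (d (H + 1))) ℝ)
    (B : ∀ i : ℕ, Matrix (Fin (d 0)) (Fin (d i)) ℝ)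
    (hAtop : A (H + 1) = 1)
    (hA : ∀ i ≤ H, A i = (W i)ᵀ * A (i + 1))
    (hB0 : B 0 = 1)
    (hB : ∀ i ≤ H, B (i + 1) = B i * (W i)ᵀ)
    (hrank : ((A 0)ᵀ).rank = k)
    (E : Matrix (Fin (d (H + 1))) (Fin (d 0)) ℝ)
    (hE : E = ((A 0)ᵀ * X - Y) * Xᵀ) :
    (∀ i ≤ H, A (i + 1) * E * B i = 0) ↔ (A p * E = 0 ∧ E * B p = 0) := by
  -- factorization of A: for i ≤ j ≤ H+1, A i = M * A j
  have hAfac : ∀ i j : ℕ, i ≤ j → j ≤ H + 1 →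
      ∃ M : Matrix (Fin (d i)) (Fin (d j)) ℝ, A i = M * A j := by
    intro i j hij
    induction j, hij using Nat.le_induction with
    | base => exact fun _ => ⟨1, (Matrix.one_mul _).symm⟩
    | succ j hij ih =>
      intro hj1
      obtain ⟨M, hM⟩ := ih (by omega)
      exact ⟨M * (W j)ᵀ, by rw [hM, hA j (by omega), Matrix.mul_assoc]⟩
  -- factorization of B: for i ≤ j ≤ H+1, B j = B i * N
  have hBfac : ∀ i j : ℕ, i ≤ j → j ≤ H + 1 →
      ∃ N : Matrix (Fin (d i)) (Fin (d j)) ℝ, B j = B i * N := by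
    intro i j hij
    induction j, hij using Nat.le_induction with
    | base => exact fun _ => ⟨1, (Matrix.mul_one _).symm⟩
    | succ j hij ih =>
      intro hj1
      obtain ⟨N, hN⟩ := ih (by omega)
      exact ⟨N * (W j)ᵀ, by rw [hB j (by omega), hN, Matrix.mul_assoc]⟩
  -- A 0 = B i * A i
  have hBA : ∀ i ≤ H + 1, A 0 = B i * A i := by
    intro i hi
    induction i with
    | zero => rw [hB0, Matrix.one_mul]
    | succ i ih =>
      rw [hB i (by omega), Matrix.mul_assoc, ← hA i (by omega), ih (by omega)]
  have hrank0 : (A 0).rank = k := by rw [← Matrix.rank_transpose, hrank]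
  constructor
  · intro h
    have h0 : A 1 * E = 0 := by
      have := h 0 (Nat.zero_le _)
      rwa [hB0, Matrix.mul_one] at this
    have hH : E * B H = 0 := by
      have := h H le_rfl
      rwa [hAtop, Matrix.one_mul] at this
    -- A p * E = 0
    obtain ⟨M, hM⟩ := hAfac 1 p hp1 (by omega)
    have hrM : M.rank = d p := by
      have h1 : k ≤ (A 1).rank := by
        rw [← hrank0, hA 0 (by omega)]
        exact Matrix.rank_mul_le_right _ _
      have h2 : (A 1).rank ≤ M.rank := by
        rw [hM]; exact Matrix.rank_mul_le_left _ _
      have h3 : M.rank ≤ d p := by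
        simpa using M.rank_le_card_width
      omega
    obtain ⟨D, hD⟩ := left_inv_of_rank M hrM
    have hApE : A p * E = 0 := by
      have : A p = D * A 1 := by
        rw [hM, ← Matrix.mul_assoc, hD, Matrix.one_mul]
      rw [this, Matrix.mul_assoc, h0, Matrix.mul_zero]
    -- E * B p = 0
    obtain ⟨N, hN⟩ := hBfac p H hpH (by omega)
    have hrN : N.rank = d p := by
      have h1 : k ≤ (B H).rank := by
        rw [← hrank0, hBA H (by omega)]
        exact Matrix.rank_mul_le_left _ _
      have h2 : (B H).rank ≤ N.rank := by
        rw [hN]; exact Matrix.rank_mul_le_right _ _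
      have h3 : N.rank ≤ d p := by
        simpa using N.rank_le_card_height
      omega
    obtain ⟨D', hD'⟩ := right_inv_of_rank N hrN
    have hEBp : E * B p = 0 := by
      have : B p = B H * D' := by
        rw [hN, Matrix.mul_assoc, hD', Matrix.mul_one]
      rw [this, ← Matrix.mul_assoc, hH, Matrix.zero_mul]
    exact ⟨hApE, hEBp⟩
  · rintro ⟨hApE, hEBp⟩ i hi
    rcases le_or_gt (i + 1) p with hip | hip
    · obtain ⟨M, hM⟩ := hAfac (i + 1) p hip (by omega)
      rw [hM, Matrix.mul_assoc M, hApE, Matrix.mul_zero, Matrix.zero_mul]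
    · obtain ⟨N, hN⟩ := hBfac p i (by omega) (by omega)
      rw [hN, Matrix.mul_assoc, ← Matrix.mul_assoc E, hEBp, Matrix.zero_mul, Matrix.mul_zero]
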